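/- Let (V,g) be a complex quadratic space and N a totally null subspace. For any nonzero element ν of the top exterior power of the annihilator of N in V*, the (m+1)-form ν is totally null, meaning the contraction of ν with itself via the inverse metric in the first index vanishes: ν_{a a₁…a_m} ν^a{}_{b₁…b_m} = 0. -/

import Mathlib

/-- Let `(V,g)` be a complex quadratic space of dimension `2m+2`
and `N` a totally null subspace of dimension `m+1`.  For any element `ν` of
`Λ^{m+1} Ann(N)` — encoded here as an alternating `(m+1)`-form annihilated by
interior product with every vector of `N` — the form `ν` is totally null: the
contraction `ν_{a a₁…a_m} ν^a{}_{b₁…b_m} = 0`.  Coordinate-freely: whenever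
`w` is the `g`-dual of the covector `u ↦ ν(u, x₁, …, x_m)`, then
`ν(w, y₁, …, y_m) = 0` for all `y`. -/
theorem totally_null_form_contraction (m : ℕ) (V : Type*) [AddCommGroup V] [Module ℂ V]
    [FiniteDimensional ℂ V] (hdim : Module.finrank ℂ V = 2 * m + 2)
    (g : V →ₗ[ℂ] V →ₗ[ℂ] ℂ)
    (hsymm : ∀ v w, g v w = g w v)
    (hnd : ∀ v, (∀ w, g v w = 0) → v = 0)
    (N : Submodule ℂ V) (hNdim : Module.finrank ℂ N = m + 1)
    (hNnull : ∀ u ∈ N, ∀ v ∈ N, g u v = 0)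
    (ν : AlternatingMap ℂ V ℂ (Fin (m + 1))) (hν : ν ≠ 0)
    (hνN : ∀ v ∈ N, ∀ x : Fin m → V, ν (Fin.cons v x) = 0) :
    ∀ (x y : Fin m → V) (w : V), (∀ u, g w u = ν (Fin.cons u x)) →
      ν (Fin.cons w y) = 0 := by
  intro x y w hw
  have hrefl : g.IsRefl := fun u v h => by rw [hsymm]; exact h
  have hnd' : LinearMap.BilinForm.Nondegenerate g :=
    ⟨fun v h => hnd v h, fun v h => hnd v (fun w => (hsymm v w).trans (h w))⟩
  -- N equals its own orthogonal complement
  have hle : N ≤ LinearMap.BilinForm.orthogonal g N := by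
    intro v hv
    rw [LinearMap.BilinForm.mem_orthogonal_iff]
    intro n hn
    exact hNnull n hn v hv
  have horth : LinearMap.BilinForm.orthogonal g N = N := by
    refine (Submodule.eq_of_le_of_finrank_le hle ?_).symm
    rw [LinearMap.BilinForm.finrank_orthogonal hnd', hdim, hNdim]
    omega
  -- w is orthogonal to N
  have hwN : w ∈ N := by
    rw [← horth, LinearMap.BilinForm.mem_orthogonal_iff]
    intro n hn
    have : g w n = 0 := by rw [hw n]; exact hνN n hn x
    exact (hsymm n w).trans this
  exact hνN w hwN y
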